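/- Let Jₙ = Tⁿ∘J₀ with J₀ ≡ 0, where T is a monotone operator on functions S → ℝ (S finite nonempty) satisfying T∘(J + d) = (T∘J) + d for constants d, and Tⁿ denotes n-fold application. Then the sequence n ↦ min_s Jₙ(s) is superadditive: min_s J_{n+m}(s) ≥ min_s Jₙ(s) + min_s Jₘ(s), and the sequence n ↦ max_s Jₙ(s) is subadditive: max_s J_{n+m}(s) ≤ max_s Jₙ(s) + max_s Jₘ(s). -/

import Mathlib

/-- Lemma 5 of the paper: for a monotone, constant-shift-commuting operator `T`
on functions `S → ℝ` and `Jₙ = Tⁿ 0`, the sequence `n ↦ min_s Jₙ s` is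
superadditive and the sequence `n ↦ max_s Jₙ s` is subadditive. -/
theorem dp_min_superadditive_max_subadditive {S : Type*} [Fintype S] [Nonempty S]
    (T : (S → ℝ) → (S → ℝ))
    (hmono : ∀ W V : S → ℝ, (∀ s, V s ≤ W s) → ∀ s, T V s ≤ T W s)
    (hshift : ∀ (J : S → ℝ) (d : ℝ), T (fun s => J s + d) = fun s => T J s + d)
    (J : ℕ → S → ℝ)
    (hJ : ∀ n, J n = T^[n] (fun _ => 0)) :
    (∀ n m : ℕ, Finset.univ.inf' Finset.univ_nonempty (J n) +
        Finset.univ.inf' Finset.univ_nonempty (J m) ≤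
        Finset.univ.inf' Finset.univ_nonempty (J (n + m))) ∧
      (∀ n m : ℕ, Finset.univ.sup' Finset.univ_nonempty (J (n + m)) ≤
        Finset.univ.sup' Finset.univ_nonempty (J n) +
        Finset.univ.sup' Finset.univ_nonempty (J m)) := by
  have itermono : ∀ (n : ℕ) (W V : S → ℝ), (∀ s, V s ≤ W s) →
      ∀ s, T^[n] V s ≤ T^[n] W s := by
    intro n
    induction n with
    | zero => intro W V h s; simpa using h s
    | succ k ih =>
      intro W V h s
      rw [Function.iterate_succ_apply', Function.iterate_succ_apply']
      exact hmono _ _ (ih W V h) s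
  have itershift : ∀ (n : ℕ) (V : S → ℝ) (d : ℝ),
      T^[n] (fun s => V s + d) = fun s => T^[n] V s + d := by
    intro n
    induction n with
    | zero => intro V d; rfl
    | succ k ih =>
      intro V d
      rw [Function.iterate_succ_apply', Function.iterate_succ_apply', ih, hshift]
  have hnm : ∀ n m : ℕ, J (n + m) = T^[n] (J m) := by
    intro n m
    rw [hJ, hJ, Function.iterate_add_apply]
  constructor
  · intro n m
    set c := Finset.univ.inf' Finset.univ_nonempty (J m) with hc
    have h1 : ∀ s, (fun s => (0:ℝ) + c) s ≤ J m s := by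
      intro s
      rw [zero_add]; exact Finset.inf'_le (J m) (Finset.mem_univ s)
    have h2 : ∀ s, J n s + c ≤ J (n + m) s := by
      intro s
      have := itermono n (J m) (fun _ => (0:ℝ) + c) h1 s
      rw [itershift n (fun _ => (0:ℝ)) c] at this
      rw [hnm, hJ n]
      simpa using this
    apply Finset.le_inf'
    intro s _
    calc Finset.univ.inf' Finset.univ_nonempty (J n) + c ≤ J n s + c := by
          exact add_le_add (Finset.inf'_le _ (Finset.mem_univ s)) (le_refl c)
      _ ≤ J (n + m) s := h2 s
  · intro n m
    set c := Finset.univ.sup' Finset.univ_nonempty (J m) with hc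
    have h1 : ∀ s, J m s ≤ (fun s => (0:ℝ) + c) s := by
      intro s
      rw [zero_add]; exact Finset.le_sup' (J m) (Finset.mem_univ s)
    have h2 : ∀ s, J (n + m) s ≤ J n s + c := by
      intro s
      have := itermono n (fun _ => (0:ℝ) + c) (J m) h1 s
      rw [itershift n (fun _ => (0:ℝ)) c] at this
      rw [hnm, hJ n]
      simpa using this
    apply Finset.sup'_le
    intro s _
    calc J (n + m) s ≤ J n s + c := h2 s
      _ ≤ Finset.univ.sup' Finset.univ_nonempty (J n) + c :=
          add_le_add (Finset.le_sup' _ (Finset.mem_univ s)) (le_refl c)
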